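/- Let $R, \delta > 0$ and let $Z$ be a non-negative real random variable satisfying $\Pr(|Z-1| \geq t) \leq R e^{-t/\delta}$ for all $t \geq 0$. Then for any real $2 \leq \ell \leq 1/(2\delta)$, one has $\mathbb{E}[Z^\ell] \leq 1 + \ell\,\mathbb{E}[Z-1] + 2R(\ell\delta)^2$. -/

import Mathlib

open MeasureTheory Real Set

-- the antiderivative G and integrand g
noncomputable def Gfun (l x : ℝ) : ℝ := l/(l-1) * (Real.exp ((l-1)*x) - 1) - l * x
noncomputable def gfun (l t : ℝ) : ℝ := l * (Real.exp ((l-1)*t) - 1)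

lemma gfun_cont (l : ℝ) : Continuous (gfun l) := by
  unfold gfun; fun_prop

lemma gfun_nonneg {l t : ℝ} (hl : 2 ≤ l) (ht : 0 ≤ t) : 0 ≤ gfun l t := by
  unfold gfun
  have h1 : (1:ℝ) ≤ Real.exp ((l-1)*t) := Real.one_le_exp (by nlinarith)
  nlinarith

lemma Gfun_hasDeriv {l : ℝ} (hl : 2 ≤ l) (t : ℝ) :
    HasDerivAt (Gfun l) (gfun l t) t := by
  have h1 : HasDerivAt (fun t : ℝ => Real.exp ((l-1)*t)) ((l-1) * Real.exp ((l-1)*t)) t := by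
    simpa [mul_comm] using ((hasDerivAt_id t).const_mul (l-1)).exp
  have h2 := ((h1.sub_const 1).const_mul (l/(l-1))).sub ((hasDerivAt_id t).const_mul l)
  convert h2 using 1
  case e'_4 => rfl
  case e'_5 => rfl
  case e'_8 => rfl
  unfold gfun
  have : l - 1 ≠ 0 := by linarith
  field_simp

lemma Gfun_eq_integral {l : ℝ} (hl : 2 ≤ l) (x : ℝ) :
    Gfun l x = ∫ t in (0:ℝ)..x, gfun l t := by
  have := intervalIntegral.integral_eq_sub_of_hasDerivAt
    (f := Gfun l) (f' := gfun l) (a := 0) (b := x)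
    (fun t _ => Gfun_hasDeriv hl t)
    ((gfun_cont l).intervalIntegrable 0 x)
  have h0 : Gfun l 0 = 0 := by unfold Gfun; simp
  rw [this, h0, sub_zero]

lemma Gfun_nonneg {l x : ℝ} (hl : 2 ≤ l) (hx : 0 ≤ x) : 0 ≤ Gfun l x := by
  rw [Gfun_eq_integral hl]
  apply intervalIntegral.integral_nonneg hx
  intro u hu
  exact gfun_nonneg hl hu.1

lemma key_pos {l : ℝ} (hl : 2 ≤ l) {x : ℝ} (hx : 0 ≤ x) :
    (1+x) ^ l ≤ 1 + l/(l-1) * (Real.exp ((l-1)*x) - 1) := by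
  set φ : ℝ → ℝ := fun t => 1 + l/(l-1) * (Real.exp ((l-1)*t) - 1) - (1+t)^l with hφ
  have hd : ∀ t : ℝ, HasDerivAt φ (l * Real.exp ((l-1)*t) - l * (1+t)^(l-1)) t := by
    intro t
    have h1 : HasDerivAt (fun t : ℝ => Real.exp ((l-1)*t)) ((l-1) * Real.exp ((l-1)*t)) t := by
      simpa [mul_comm] using ((hasDerivAt_id t).const_mul (l-1)).exp
    have h2 : HasDerivAt (fun t : ℝ => (1+t)^l) (l * (1+t)^(l-1)) t := by
      have := HasDerivAt.rpow_const (f := fun t : ℝ => 1 + t) (f' := 1)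
        ((hasDerivAt_id t).const_add 1) (p := l) (Or.inr (by linarith))
      simpa using this
    have h3 := (((h1.sub_const 1).const_mul (l/(l-1))).const_add 1).sub h2
    convert h3 using 1
    case e'_4 => rfl
    case e'_5 => rfl
    case e'_8 => rfl
    have : l - 1 ≠ 0 := by linarith
    field_simp
  have hmono : MonotoneOn φ (Ici (0:ℝ)) := by
    have hdiff : Differentiable ℝ φ := fun t => (hd t).differentiableAt
    apply monotoneOn_of_deriv_nonneg (convex_Ici 0) hdiff.continuous.continuousOn
      hdiff.differentiableOn
    intro t ht
    rw [interior_Ici] at ht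
    rw [(hd t).deriv]
    have ht0 : (0:ℝ) ≤ t := le_of_lt ht
    have hb : (1+t) ^ (l-1) ≤ Real.exp ((l-1)*t) := by
      calc (1+t) ^ (l-1) ≤ (Real.exp t) ^ (l-1) := by
            apply Real.rpow_le_rpow (by linarith) (by linarith [Real.add_one_le_exp t])
              (by linarith)
        _ = Real.exp ((l-1)*t) := by rw [← Real.exp_mul, mul_comm]
    nlinarith
  have h0 : φ 0 = 0 := by simp [hφ]
  have := hmono (self_mem_Ici) hx hx
  rw [h0] at this
  simp only [hφ] at this
  linarith

lemma key_neg {l : ℝ} (hl : 2 ≤ l) {t : ℝ} (ht : t ∈ Icc (0:ℝ) 1) :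
    (1-t) ^ l + 2*l*t ≤ (1+t) ^ l := by
  set ψ : ℝ → ℝ := fun t => (1+t)^l - (1-t)^l - 2*l*t with hψ
  have hd : ∀ t : ℝ, HasDerivAt ψ (l * (1+t)^(l-1) + l * (1-t)^(l-1) - 2*l) t := by
    intro t
    have h2 : HasDerivAt (fun t : ℝ => (1+t)^l) (l * (1+t)^(l-1)) t := by
      have := HasDerivAt.rpow_const (f := fun t : ℝ => 1 + t) (f' := 1)
        ((hasDerivAt_id t).const_add 1) (p := l) (Or.inr (by linarith))
      simpa using this
    have h3 : HasDerivAt (fun t : ℝ => (1-t)^l) (-(l * (1-t)^(l-1))) t := by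
      have hb : HasDerivAt (fun t : ℝ => 1 - t) (-1) t := by
        simpa using ((hasDerivAt_id t).const_sub 1)
      have := HasDerivAt.rpow_const hb (p := l) (Or.inr (by linarith))
      convert this using 1
      ring
    have h4 : HasDerivAt (fun t : ℝ => 2*l*t) (2*l) t := by
      simpa using (hasDerivAt_id t).const_mul (2*l)
    have := (h2.sub h3).sub h4
    convert this using 1
    case e'_4 => rfl
    case e'_5 => rfl
    case e'_8 => rfl
    ring
  have hmono : MonotoneOn ψ (Icc (0:ℝ) 1) := by
    have hdiff : Differentiable ℝ ψ := fun t => (hd t).differentiableAt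
    apply monotoneOn_of_deriv_nonneg (convex_Icc 0 1) hdiff.continuous.continuousOn
      hdiff.differentiableOn
    intro s hs
    rw [interior_Icc] at hs
    rw [(hd s).deriv]
    have h1 : (1:ℝ) ≤ 1/2 * (1+s)^(l-1) + 1/2 * (1-s)^(l-1) := by
      have hc := convexOn_rpow (p := l-1) (by linarith)
      have := hc.2 (show (1+s) ∈ Ici (0:ℝ) by simp; linarith [hs.1])
        (show (1-s) ∈ Ici (0:ℝ) by simp; linarith [hs.2])
        (show (0:ℝ) ≤ 1/2 by norm_num) (show (0:ℝ) ≤ 1/2 by norm_num)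
        (show (1/2:ℝ) + 1/2 = 1 by norm_num)
      simp only [smul_eq_mul] at this
      have heq : (1/2 : ℝ) * (1+s) + 1/2 * (1-s) = 1 := by ring
      rw [heq, Real.one_rpow] at this
      linarith
    nlinarith
  have h0 : ψ 0 = 0 := by simp [hψ]
  have := hmono (left_mem_Icc.mpr zero_le_one) ht ht.1
  rw [h0] at this
  simp only [hψ] at this
  linarith

lemma pointwise_bound {l : ℝ} (hl : 2 ≤ l) {z : ℝ} (hz : 0 ≤ z) :
    z ^ l ≤ 1 + l * (z - 1) + Gfun l |z - 1| := by
  rcases le_total 1 z with h1 | h1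
  · have habs : |z - 1| = z - 1 := abs_of_nonneg (by linarith)
    rw [habs]
    have := key_pos hl (x := z - 1) (by linarith)
    have hz1 : 1 + (z - 1) = z := by ring
    rw [hz1] at this
    unfold Gfun
    linarith
  · have habs : |z - 1| = 1 - z := by
      rw [abs_of_nonpos (by linarith : z - 1 ≤ 0)]; ring
    rw [habs]
    set t := 1 - z with htdef
    have ht : t ∈ Icc (0:ℝ) 1 := ⟨by linarith, by linarith⟩
    have hB := key_neg hl ht
    have hA := key_pos hl (x := t) ht.1
    have hz1 : (1:ℝ) - t = z := by ring
    rw [hz1] at hB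
    unfold Gfun
    have : z - 1 = -t := by ring
    rw [this]
    nlinarith

lemma exp_integral_Ioi0 {b : ℝ} (hb : 0 < b) :
    ∫ x in Ioi (0:ℝ), Real.exp (-(b * x)) = 1 / b := by
  have h := integral_comp_mul_left_Ioi (fun x => Real.exp (-x)) 0 hb
  simp only [mul_zero, integral_exp_neg_Ioi, neg_zero, Real.exp_zero, smul_eq_mul,
    mul_one] at h
  rw [h, one_div]

lemma tail_integral_bound {R δ l : ℝ} (hR : 0 < R) (hδ : 0 < δ) (hl : 2 ≤ l)
    (hlδ : l * δ ≤ 1/2) :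
    IntegrableOn (fun t => R * Real.exp (-t/δ) * gfun l t) (Ioi (0:ℝ)) ∧
    (∫ t in Ioi (0:ℝ), R * Real.exp (-t/δ) * gfun l t) ≤ 2 * R * (l*δ)^2 := by
  set c₁ : ℝ := 1/δ - (l-1) with hc₁def
  have hδ' : (0:ℝ) < 1/δ := by positivity
  have hc₁ : 0 < c₁ := by
    rw [hc₁def, sub_pos, lt_div_iff₀ hδ]
    nlinarith
  have hfeq : (fun t => R * Real.exp (-t/δ) * gfun l t)
      = fun t => R*l*Real.exp (-(c₁*t)) - R*l*Real.exp (-((1/δ)*t)) := by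
    funext t
    unfold gfun
    rw [show -(c₁*t) = -t/δ + (l-1)*t from by rw [hc₁def]; ring,
      show -((1/δ)*t) = -t/δ from by ring, Real.exp_add]
    ring
  have i1 : IntegrableOn (fun t => Real.exp (-(c₁ * t))) (Ioi (0:ℝ)) := by
    simpa [neg_mul] using exp_neg_integrableOn_Ioi 0 hc₁
  have i2 : IntegrableOn (fun t => Real.exp (-((1/δ) * t))) (Ioi (0:ℝ)) := by
    simpa [neg_mul] using exp_neg_integrableOn_Ioi 0 hδ'
  have hint : IntegrableOn (fun t => R*l*Real.exp (-(c₁*t)) - R*l*Real.exp (-((1/δ)*t)))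
      (Ioi (0:ℝ)) := (i1.const_mul _).sub (i2.const_mul _)
  constructor
  · rw [hfeq]; exact hint
  · rw [hfeq, integral_sub (i1.const_mul _) (i2.const_mul _), integral_const_mul,
      integral_const_mul, exp_integral_Ioi0 hc₁, exp_integral_Ioi0 hδ', one_div_one_div]
    have h1 : c₁ * δ = 1 - (l-1)*δ := by
      rw [hc₁def]
      field_simp
    have h2 : 0 ≤ (l-1)*(1-2*(l*δ)) := mul_nonneg (by linarith) (by linarith)
    have key : 1/c₁ ≤ δ + 2*l*δ^2 := by
      rw [div_le_iff₀ hc₁]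
      calc (1:ℝ) ≤ (1 + 2*l*δ) * (1-(l-1)*δ) := by nlinarith [mul_nonneg hδ.le h2]
        _ = (1 + 2*l*δ) * (c₁ * δ) := by rw [h1]
        _ = (δ + 2*l*δ^2) * c₁ := by ring
    nlinarith [mul_le_mul_of_nonneg_left key (show (0:ℝ) ≤ R*l by positivity)]

/-- If a nonnegative integrable random variable `Z` satisfies `Pr(|Z-1| ≥ t) ≤ R e^{-t/δ}`
for all `t ≥ 0`, then for any real `2 ≤ ℓ ≤ 1/(2δ)`,
`E[Z^ℓ] ≤ 1 + ℓ E[Z-1] + 2R(ℓδ)²`. -/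
theorem moment_bound_of_tail {Ω : Type*} [MeasurableSpace Ω] (μ : Measure Ω)
    [IsProbabilityMeasure μ] (R δ : ℝ) (hR : 0 < R) (hδ : 0 < δ)
    (Z : Ω → ℝ) (hZm : Measurable Z) (hZ0 : ∀ ω, 0 ≤ Z ω) (hZint : Integrable Z μ)
    (htail : ∀ t : ℝ, 0 ≤ t → (μ {ω | t ≤ |Z ω - 1|}).toReal ≤ R * Real.exp (-t / δ))
    (ℓ : ℝ) (hℓ2 : 2 ≤ ℓ) (hℓδ : ℓ ≤ 1 / (2 * δ)) :
    ∫ ω, Z ω ^ ℓ ∂μ ≤ 1 + ℓ * ∫ ω, (Z ω - 1) ∂μ + 2 * R * (ℓ * δ) ^ 2 := by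
  have hlδ : ℓ * δ ≤ 1/2 := by
    rw [le_div_iff₀ (by positivity)] at hℓδ
    linarith
  have hfm : Measurable fun ω => |Z ω - 1| := (hZm.sub measurable_const).abs
  have hGcont : Continuous (Gfun ℓ) := by unfold Gfun; fun_prop
  have hlayer := lintegral_comp_eq_lintegral_meas_le_mul (μ := μ)
      (f := fun ω => |Z ω - 1|) (g := gfun ℓ)
      (Filter.Eventually.of_forall fun ω => abs_nonneg _) hfm.aemeasurable
      (fun t _ => (gfun_cont ℓ).intervalIntegrable 0 t)
      ((ae_restrict_mem measurableSet_Ioi).mono fun t ht => gfun_nonneg hℓ2 (le_of_lt ht))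
  have hLHSeq : ∫⁻ ω, ENNReal.ofReal (∫ t in (0:ℝ)..|Z ω - 1|, gfun ℓ t) ∂μ
      = ∫⁻ ω, ENNReal.ofReal (Gfun ℓ |Z ω - 1|) ∂μ := by
    congr 1
    funext ω
    rw [Gfun_eq_integral hℓ2]
  obtain ⟨hTint, hTbound⟩ := tail_integral_bound hR hδ hℓ2 hlδ
  have htail_nn : ∀ᵐ t ∂(volume.restrict (Ioi (0:ℝ))), 0 ≤ R * Real.exp (-t/δ) * gfun ℓ t :=
    (ae_restrict_mem measurableSet_Ioi).mono fun t ht =>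
      mul_nonneg (mul_nonneg hR.le (Real.exp_nonneg _)) (gfun_nonneg hℓ2 ht.le)
  have hRHSle : (∫⁻ t in Ioi (0:ℝ), μ {a | t ≤ |Z a - 1|} * ENNReal.ofReal (gfun ℓ t))
      ≤ ENNReal.ofReal (2 * R * (ℓ*δ)^2) := by
    calc (∫⁻ t in Ioi (0:ℝ), μ {a | t ≤ |Z a - 1|} * ENNReal.ofReal (gfun ℓ t))
        ≤ ∫⁻ t in Ioi (0:ℝ), ENNReal.ofReal (R * Real.exp (-t/δ) * gfun ℓ t) := by
          apply setLIntegral_mono' measurableSet_Ioi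
          intro t ht
          have hμ : μ {a | t ≤ |Z a - 1|} ≤ ENNReal.ofReal (R * Real.exp (-t/δ)) := by
            conv_lhs => rw [← ENNReal.ofReal_toReal (measure_ne_top μ _)]
            exact ENNReal.ofReal_le_ofReal (htail t (le_of_lt ht))
          calc μ {a | t ≤ |Z a - 1|} * ENNReal.ofReal (gfun ℓ t)
              ≤ ENNReal.ofReal (R * Real.exp (-t/δ)) * ENNReal.ofReal (gfun ℓ t) :=
                mul_le_mul_left hμ _
            _ = ENNReal.ofReal (R * Real.exp (-t/δ) * gfun ℓ t) :=
                (ENNReal.ofReal_mul (by positivity)).symm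
      _ = ENNReal.ofReal (∫ t in Ioi (0:ℝ), R * Real.exp (-t/δ) * gfun ℓ t) :=
          (ofReal_integral_eq_lintegral_ofReal hTint htail_nn).symm
      _ ≤ ENNReal.ofReal (2 * R * (ℓ*δ)^2) := ENNReal.ofReal_le_ofReal hTbound
  have hGlint : ∫⁻ ω, ENNReal.ofReal (Gfun ℓ |Z ω - 1|) ∂μ ≤ ENNReal.ofReal (2*R*(ℓ*δ)^2) := by
    rw [← hLHSeq, hlayer]
    exact hRHSle
  have hGnn : ∀ ω, 0 ≤ Gfun ℓ |Z ω - 1| := fun ω => Gfun_nonneg hℓ2 (abs_nonneg _)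
  have hGmeas : AEStronglyMeasurable (fun ω => Gfun ℓ |Z ω - 1|) μ :=
    (hGcont.measurable.comp hfm).aestronglyMeasurable
  have hGint : Integrable (fun ω => Gfun ℓ |Z ω - 1|) μ := by
    refine ⟨hGmeas, ?_⟩
    rw [hasFiniteIntegral_iff_ofReal (Filter.Eventually.of_forall hGnn)]
    exact lt_of_le_of_lt hGlint ENNReal.ofReal_lt_top
  have hsub : Integrable (fun ω => Z ω - 1) μ := hZint.sub (integrable_const 1)
  have h1int : Integrable (fun ω => (1:ℝ) + ℓ * (Z ω - 1)) μ :=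
    (integrable_const 1).add (hsub.const_mul ℓ)
  have hbint : Integrable (fun ω => 1 + ℓ * (Z ω - 1) + Gfun ℓ |Z ω - 1|) μ := h1int.add hGint
  have hmain : ∫ ω, Z ω ^ ℓ ∂μ ≤ ∫ ω, (1 + ℓ * (Z ω - 1) + Gfun ℓ |Z ω - 1|) ∂μ := by
    apply integral_mono_of_nonneg
    · exact Filter.Eventually.of_forall fun ω => Real.rpow_nonneg (hZ0 ω) ℓ
    · exact hbint
    · exact Filter.Eventually.of_forall fun ω => pointwise_bound hℓ2 (hZ0 ω)
  have hGval : ∫ ω, Gfun ℓ |Z ω - 1| ∂μ ≤ 2*R*(ℓ*δ)^2 := by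
    rw [integral_eq_lintegral_of_nonneg_ae (Filter.Eventually.of_forall hGnn) hGmeas]
    calc (∫⁻ ω, ENNReal.ofReal (Gfun ℓ |Z ω - 1|) ∂μ).toReal
        ≤ (ENNReal.ofReal (2*R*(ℓ*δ)^2)).toReal :=
          ENNReal.toReal_mono ENNReal.ofReal_ne_top hGlint
      _ = 2*R*(ℓ*δ)^2 := ENNReal.toReal_ofReal (by positivity)
  have hsplit : ∫ ω, (1 + ℓ * (Z ω - 1) + Gfun ℓ |Z ω - 1|) ∂μ
      = 1 + ℓ * (∫ ω, (Z ω - 1) ∂μ) + ∫ ω, Gfun ℓ |Z ω - 1| ∂μ := by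
    rw [integral_add h1int hGint, integral_add (integrable_const 1) (hsub.const_mul ℓ),
      integral_const, integral_const_mul]
    simp
  rw [hsplit] at hmain
  linarith
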